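/- The number a(n,k) of allowable RG-words of length n with maximum letter k satisfies the recurrence a(n,k) = a(n−1,k−1) + ⌈k/2⌉·a(n−1,k) for n ≥ 1 and 1 ≤ k ≤ n, with boundary conditions a(n,0) = δ_{n,0}. -/

import Mathlib

open scoped Classical

/-- The prefix maximum `max(w_1, …, w_{i-1})` (equal to `0` when `i` is the first index). -/
def pmax {n k : ℕ} (w : Fin n → Fin (k + 1)) (i : Fin n) : ℕ :=
  (Finset.univ.filter fun j => j < i).sup fun j => (w j : ℕ)

/-- `w` is a restricted growth word of length `n` with maximum letter `k`. -/
def IsRG {n k : ℕ} (w : Fin n → Fin (k + 1)) : Prop :=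
  (∀ i, 1 ≤ (w i : ℕ)) ∧ (∀ i, (w i : ℕ) ≤ pmax w i + 1) ∧
    (Finset.univ.sup fun i => (w i : ℕ)) = k

/-- An RG-word is allowable if every even letter appears exactly once. -/
def IsAllowable {n k : ℕ} (w : Fin n → Fin (k + 1)) : Prop :=
  ∀ j : ℕ, Even j → (Finset.univ.filter fun i => (w i : ℕ) = j).card ≤ 1

/-- `a(n,k)`, the number of allowable RG-words of length `n` with maximum letter `k`. -/
noncomputable def aCount (n k : ℕ) : ℕ :=
  (Finset.univ.filter fun w : Fin n → Fin (k + 1) => IsRG w ∧ IsAllowable w).card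

open Finset

lemma univ_split (m : ℕ) :
    (univ : Finset (Fin (m+1))) = insert (Fin.last m) (univ.map Fin.castSuccEmb) := by
  ext i
  simp only [mem_univ, mem_insert, mem_map, Fin.castSuccEmb, true_iff]
  rcases Fin.eq_castSucc_or_eq_last i with ⟨j, rfl⟩ | rfl
  · exact Or.inr ⟨j, by simp, rfl⟩
  · exact Or.inl rfl

lemma pmax_eq {m k : ℕ} (w : Fin (m+1) → Fin (k+1)) (c : Fin (m+1)) :
    pmax w c = (univ.filter fun j : Fin m => (j : ℕ) < (c : ℕ)).sup
      fun j => (w j.castSucc : ℕ) := by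
  unfold pmax
  have hf : (univ.filter fun i : Fin (m+1) => i < c)
      = (univ.filter fun j : Fin m => (j : ℕ) < (c : ℕ)).image Fin.castSucc := by
    ext i
    simp only [mem_filter, mem_univ, true_and, mem_image, Fin.lt_def]
    constructor
    · intro h
      exact ⟨⟨(i : ℕ), lt_of_lt_of_le h (Nat.lt_succ_iff.mp c.isLt)⟩, h, by
        simp [Fin.ext_iff]⟩
    · rintro ⟨j, hj, rfl⟩; simpa using hj
  rw [hf, Finset.sup_image]
  rfl

lemma pmax_castSucc {m k : ℕ} (w : Fin (m+1) → Fin (k+1)) (j : Fin m) :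
    pmax w j.castSucc = pmax (fun t => w t.castSucc) j := by
  rw [pmax_eq]
  rfl

lemma pmax_last {m k : ℕ} (w : Fin (m+1) → Fin (k+1)) :
    pmax w (Fin.last m) = univ.sup (fun t : Fin m => (w t.castSucc : ℕ)) := by
  rw [pmax_eq]
  congr 1
  apply Finset.filter_true_of_mem
  intro t _
  simpa using t.isLt

lemma sup_split {m k : ℕ} (w : Fin (m+1) → Fin (k+1)) :
    (univ.sup fun i => (w i : ℕ))
      = max (univ.sup fun t : Fin m => (w t.castSucc : ℕ)) ((w (Fin.last m) : ℕ)) := by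
  rw [univ_split, Finset.sup_insert, Finset.sup_map]
  simp [max_comm, Fin.castSuccEmb]
  rfl

lemma count_split {m k : ℕ} (w : Fin (m+1) → Fin (k+1)) (v : ℕ) :
    (univ.filter fun i => (w i : ℕ) = v).card
      = (univ.filter fun t : Fin m => (w t.castSucc : ℕ) = v).card
        + (if (w (Fin.last m) : ℕ) = v then 1 else 0) := by
  classical
  rw [Finset.card_filter, Finset.card_filter, Fin.sum_univ_castSucc]

lemma exists_val {m k : ℕ} (p : Fin m → Fin (k+1))
    (hg : ∀ i, (p i : ℕ) ≤ pmax p i + 1) (v : ℕ) (hv1 : 1 ≤ v)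
    (hv : v ≤ univ.sup fun i => (p i : ℕ)) : ∃ i, (p i : ℕ) = v := by
  classical
  have hb : (⊥:ℕ) < v := by simp; omega
  set T := univ.filter fun i : Fin m => v ≤ (p i : ℕ) with hT
  have hne : T.Nonempty := by
    obtain ⟨i, _, hi⟩ := (Finset.le_sup_iff hb).mp hv
    exact ⟨i, by simp [hT, hi]⟩
  have hmem : v ≤ (p (T.min' hne) : ℕ) := by
    have := T.min'_mem hne
    exact (Finset.mem_filter.mp this).2
  refine ⟨T.min' hne, ?_⟩
  by_contra hne2
  have h2 : v ≤ pmax p (T.min' hne) := by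
    have := hg (T.min' hne); omega
  unfold pmax at h2
  obtain ⟨j, hj, hj2⟩ := (Finset.le_sup_iff hb).mp h2
  rw [mem_filter] at hj
  have : T.min' hne ≤ j := Finset.min'_le _ j (Finset.mem_filter.mpr (by simp [hj2]))
  exact absurd hj.2 (not_lt.mpr this)

lemma pmax_congr {m k k' : ℕ} {p : Fin m → Fin (k+1)} {q : Fin m → Fin (k'+1)}
    (h : ∀ i, (p i : ℕ) = (q i : ℕ)) (j : Fin m) : pmax p j = pmax q j :=
  Finset.sup_congr rfl (fun i _ => h i)

lemma Msup_congr {m k k' : ℕ} {p : Fin m → Fin (k+1)} {q : Fin m → Fin (k'+1)}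
    (h : ∀ i, (p i : ℕ) = (q i : ℕ)) :
    (univ.sup fun i => (p i : ℕ)) = univ.sup fun i => (q i : ℕ) :=
  Finset.sup_congr rfl (fun i _ => h i)

lemma allow_congr {m k k' : ℕ} {p : Fin m → Fin (k+1)} {q : Fin m → Fin (k'+1)}
    (h : ∀ i, (p i : ℕ) = (q i : ℕ)) : IsAllowable p ↔ IsAllowable q := by
  have hc : ∀ v : ℕ, (univ.filter fun i => (p i : ℕ) = v).card
      = (univ.filter fun i => (q i : ℕ) = v).card := by
    intro v
    congr 1
    apply Finset.filter_congr
    intro i _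
    simp [h i]
  unfold IsAllowable
  constructor
  · intro ha v hv; rw [← hc]; exact ha v hv
  · intro ha v hv; rw [hc]; exact ha v hv

lemma snoc_RG_iff {m k : ℕ} (p : Fin m → Fin (k+1)) (c : Fin (k+1)) :
    IsRG (Fin.snoc p c) ↔
      (∀ t, 1 ≤ (p t : ℕ)) ∧ 1 ≤ (c : ℕ) ∧ (∀ t, (p t : ℕ) ≤ pmax p t + 1) ∧
        (c : ℕ) ≤ (univ.sup fun t => (p t : ℕ)) + 1 ∧
        max (univ.sup fun t => (p t : ℕ)) (c : ℕ) = k := by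
  have hinit : (fun t : Fin m => (Fin.snoc p c : Fin (m+1) → Fin (k+1)) t.castSucc) = p := by
    funext t; simp
  have hpm : ∀ t : Fin m,
      pmax (Fin.snoc p c : Fin (m+1) → Fin (k+1)) t.castSucc = pmax p t := by
    intro t; rw [pmax_castSucc, hinit]
  have hlast : pmax (Fin.snoc p c : Fin (m+1) → Fin (k+1)) (Fin.last m)
      = univ.sup fun t => (p t : ℕ) := by
    rw [pmax_last]
    exact Finset.sup_congr rfl (fun t _ => by simp)
  have hsup : (univ.sup fun i => ((Fin.snoc p c : Fin (m+1) → Fin (k+1)) i : ℕ))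
      = max (univ.sup fun t => (p t : ℕ)) (c : ℕ) := by
    rw [sup_split]
    congr 1
    · exact Finset.sup_congr rfl (fun t _ => by simp)
    · simp
  constructor
  · rintro ⟨h1, h2, h3⟩
    refine ⟨fun t => by simpa using h1 t.castSucc, by simpa using h1 (Fin.last m),
      fun t => ?_, ?_, by rw [← hsup]; exact h3⟩
    · have := h2 t.castSucc
      rw [hpm t] at this
      simpa using this
    · have := h2 (Fin.last m)
      rw [hlast] at this
      simpa using this
  · rintro ⟨h1, hc1, h2, hc2, h3⟩
    refine ⟨?_, ?_, by rw [hsup]; exact h3⟩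
    · intro i
      rcases Fin.eq_castSucc_or_eq_last i with ⟨t, rfl⟩ | rfl
      · simpa using h1 t
      · simpa using hc1
    · intro i
      rcases Fin.eq_castSucc_or_eq_last i with ⟨t, rfl⟩ | rfl
      · rw [hpm t]; simpa using h2 t
      · rw [hlast]; simpa using hc2

lemma snoc_allow_iff {m k : ℕ} (p : Fin m → Fin (k+1)) (c : Fin (k+1)) :
    IsAllowable (Fin.snoc p c : Fin (m+1) → Fin (k+1)) ↔
      IsAllowable p ∧ (Even (c : ℕ) → (univ.filter fun t => (p t : ℕ) = (c : ℕ)).card = 0) := by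
  have hcount : ∀ v : ℕ,
      (univ.filter fun i : Fin (m+1) => ((Fin.snoc p c : Fin (m+1) → Fin (k+1)) i : ℕ) = v).card
      = (univ.filter fun t : Fin m => (p t : ℕ) = v).card
        + (if (c : ℕ) = v then 1 else 0) := by
    intro v
    rw [count_split]
    congr 1
    · congr 1
      apply Finset.filter_congr
      intro t _
      simp
    · simp
  constructor
  · intro h
    refine ⟨fun v hv => ?_, fun hc => ?_⟩
    · have := h v hv
      rw [hcount v] at this
      split_ifs at this <;> omega
    · have := h _ hc
      rw [hcount] at this
      rw [if_pos rfl] at this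
      omega
  · rintro ⟨h1, h2⟩ v hv
    rw [hcount v]
    by_cases hcv : (c : ℕ) = v
    · rw [if_pos hcv]
      have h0 := h2 (by rw [hcv]; exact hv)
      rw [hcv] at h0
      omega
    · rw [if_neg hcv]
      have := h1 v hv
      omega

lemma card_odd_range (N : ℕ) : ((Finset.range N).filter (fun c => Odd c)).card = N / 2 := by
  induction N with
  | zero => simp
  | succ N ih =>
    rw [Finset.range_add_one, Finset.filter_insert]
    by_cases h : Odd N
    · rw [if_pos h, Finset.card_insert_of_notMem (by simp), ih]
      have := Nat.odd_iff.mp h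
      omega
    · rw [if_neg h, ih]
      have := Nat.not_odd_iff.mp h
      omega

theorem aCount_recurrence :
    (∀ n k : ℕ, 1 ≤ n → 1 ≤ k → k ≤ n →
      aCount n k = aCount (n - 1) (k - 1) + (k + 1) / 2 * aCount (n - 1) k) ∧
    (∀ n : ℕ, aCount n 0 = if n = 0 then 1 else 0) := by
  constructor
  · intro n k hn hk hkn
    obtain ⟨m, rfl⟩ : ∃ m, n = m + 1 := ⟨n - 1, by omega⟩
    obtain ⟨l, rfl⟩ : ∃ l, k = l + 1 := ⟨k - 1, by omega⟩
    simp only [Nat.add_sub_cancel]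
    unfold aCount
    have hsplit := Finset.card_filter_add_card_filter_not
      (s := Finset.univ.filter fun w : Fin (m+1) → Fin (l+1+1) => IsRG w ∧ IsAllowable w)
      (p := fun w => (Finset.univ.sup fun t : Fin m => (Fin.init w t : ℕ)) = l + 1)
    -- Case A : last letter is a brand new maximum
    have hfA : ∀ w : Fin (m+1) → Fin (l+1+1), (IsRG w ∧ IsAllowable w) →
        ¬((Finset.univ.sup fun t : Fin m => (Fin.init w t : ℕ)) = l + 1) →
        ((∀ t, (Fin.init w t : ℕ) ≤ l) ∧ (w (Fin.last m) : ℕ) = l + 1 ∧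
          (Finset.univ.sup fun t : Fin m => (Fin.init w t : ℕ)) = l ∧
          (∀ t, 1 ≤ (Fin.init w t : ℕ)) ∧
          (∀ t, (Fin.init w t : ℕ) ≤ pmax (Fin.init w) t + 1) ∧
          IsAllowable (Fin.init w)) := by
      intro w hw hnQ
      obtain ⟨hRG, hAl⟩ := hw
      obtain ⟨h1, hc1, h2, hc2, h3⟩ := (snoc_RG_iff (Fin.init w) (w (Fin.last m))).mp
        (by rw [Fin.snoc_init_self]; exact hRG)
      have hAl' := (snoc_allow_iff (Fin.init w) (w (Fin.last m))).mp
        (by rw [Fin.snoc_init_self]; exact hAl)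
      have hMle : (Finset.univ.sup fun t : Fin m => (Fin.init w t : ℕ)) ≤ l + 1 := by
        have := le_max_left (Finset.univ.sup fun t : Fin m => (Fin.init w t : ℕ))
          ((w (Fin.last m) : ℕ))
        rw [h3] at this; exact this
      have hsle : (Finset.univ.sup fun t : Fin m => (Fin.init w t : ℕ)) ≤ l := by omega
      have hMc : (w (Fin.last m) : ℕ) = l + 1 := by
        by_contra hne
        have hcle : (w (Fin.last m) : ℕ) ≤ l + 1 := by
          have := le_max_right (Finset.univ.sup fun t : Fin m => (Fin.init w t : ℕ))
            ((w (Fin.last m) : ℕ))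
          rw [h3] at this; exact this
        have : max (Finset.univ.sup fun t : Fin m => (Fin.init w t : ℕ))
            ((w (Fin.last m) : ℕ)) ≤ l := max_le hsle (by omega)
        omega
      refine ⟨fun t => le_trans (Finset.le_sup (f := fun t : Fin m => (Fin.init w t : ℕ))
        (Finset.mem_univ t)) hsle, hMc, by omega,
        h1, h2, hAl'.1⟩
    have hA : ((Finset.univ.filter fun w : Fin (m+1) → Fin (l+1+1) => IsRG w ∧ IsAllowable w).filter
        fun w => ¬(Finset.univ.sup fun t : Fin m => (Fin.init w t : ℕ)) = l + 1).card
        = aCount m l := by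
      unfold aCount
      refine Finset.card_nbij'
        (fun w => fun t => (⟨min (Fin.init w t : ℕ) l, by omega⟩ : Fin (l+1)))
        (fun p => Fin.snoc (fun t => (p t).castSucc) (Fin.last (l+1))) ?_ ?_ ?_ ?_
      · intro w hw
        simp only [Finset.mem_coe, Finset.mem_filter, Finset.mem_univ, true_and] at hw ⊢
        obtain ⟨hvb, hMc, hMl, h1, h2, hAl⟩ := hfA w hw.1 hw.2
        have hcongr : ∀ t, (((⟨min (Fin.init w t : ℕ) l, by omega⟩ : Fin (l+1))) : ℕ)
            = (Fin.init w t : ℕ) := fun t => min_eq_left (hvb t)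
        refine ⟨⟨fun t => by rw [hcongr t]; exact h1 t,
          fun t => by rw [hcongr t, pmax_congr hcongr t]; exact h2 t, ?_⟩,
          (allow_congr hcongr).mpr hAl⟩
        rw [Msup_congr hcongr]; exact hMl
      · intro p hp
        simp only [Finset.mem_coe, Finset.mem_filter, Finset.mem_univ, true_and] at hp ⊢
        obtain ⟨⟨hp1, hp2, hp3⟩, hpAl⟩ := hp
        have hcongr : ∀ t, (((fun t => (p t).castSucc) : Fin m → Fin (l+1+1)) t : ℕ)
            = (p t : ℕ) := fun t => by simp
        refine ⟨⟨(snoc_RG_iff _ _).mpr ⟨fun t => by rw [hcongr t]; exact hp1 t,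
            by simp, fun t => by rw [hcongr t, pmax_congr hcongr t]; exact hp2 t, ?_, ?_⟩,
          (snoc_allow_iff _ _).mpr ⟨(allow_congr hcongr).mpr hpAl, ?_⟩⟩, ?_⟩
        · rw [Msup_congr hcongr, hp3]; simp
        · rw [Msup_congr hcongr, hp3, Fin.val_last]
          exact max_eq_right (Nat.le_succ l)
        · intro _
          rw [Finset.card_eq_zero, Finset.filter_eq_empty_iff]
          intro t _
          have hlt := (p t).isLt
          simp only [Fin.coe_castSucc, Fin.val_last]
          omega
        · simp only [Fin.init_snoc]
          rw [Msup_congr hcongr, hp3]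
          omega
      · intro w hw
        simp only [Finset.mem_coe, Finset.mem_filter, Finset.mem_univ, true_and] at hw
        obtain ⟨hvb, hMc, hMl, h1, h2, hAl⟩ := hfA w hw.1 hw.2
        funext i
        rcases Fin.eq_castSucc_or_eq_last i with ⟨t, rfl⟩ | rfl
        · simp only [Fin.snoc_castSucc]
          apply Fin.ext
          simp only [Fin.coe_castSucc]
          exact min_eq_left (hvb t)
        · simp only [Fin.snoc_last]
          apply Fin.ext
          rw [Fin.val_last, hMc]
      · intro p hp
        funext t
        apply Fin.ext
        have hlt := (p t).isLt
        simp only [Fin.init_snoc, Fin.coe_castSucc]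
        omega
    -- Case B : prefix already attains the maximum
    have hfB : ∀ w : Fin (m+1) → Fin (l+1+1), (IsRG w ∧ IsAllowable w) →
        ((Finset.univ.sup fun t : Fin m => (Fin.init w t : ℕ)) = l + 1) →
        (Odd (w (Fin.last m) : ℕ) ∧ IsRG (Fin.init w) ∧ IsAllowable (Fin.init w)) := by
      intro w hw hQ
      obtain ⟨hRG, hAl⟩ := hw
      obtain ⟨h1, hc1, h2, hc2, h3⟩ := (snoc_RG_iff (Fin.init w) (w (Fin.last m))).mp
        (by rw [Fin.snoc_init_self]; exact hRG)
      have hAl' := (snoc_allow_iff (Fin.init w) (w (Fin.last m))).mp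
        (by rw [Fin.snoc_init_self]; exact hAl)
      refine ⟨?_, ⟨h1, h2, hQ⟩, hAl'.1⟩
      by_contra hne
      have heven : Even ((w (Fin.last m) : ℕ)) := Nat.not_odd_iff_even.mp hne
      have hcle : (w (Fin.last m) : ℕ) ≤ l + 1 := by
        have := (w (Fin.last m)).isLt; omega
      obtain ⟨t, ht⟩ := exists_val (Fin.init w) h2 ((w (Fin.last m) : ℕ)) hc1
        (by rw [hQ]; exact hcle)
      have h0 := hAl'.2 heven
      exact Finset.card_ne_zero_of_mem
        (Finset.mem_filter.mpr ⟨Finset.mem_univ t, ht⟩) h0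
    have hB : ((Finset.univ.filter fun w : Fin (m+1) → Fin (l+1+1) => IsRG w ∧ IsAllowable w).filter
        fun w => (Finset.univ.sup fun t : Fin m => (Fin.init w t : ℕ)) = l + 1).card
        = (((Finset.range (l+1+1)).filter (fun c => Odd c)) ×ˢ
            (Finset.univ.filter fun p : Fin m → Fin (l+1+1) => IsRG p ∧ IsAllowable p)).card := by
      refine Finset.card_nbij'
        (fun w => ((w (Fin.last m) : ℕ), Fin.init w))
        (fun b => Fin.snoc b.2 (⟨min b.1 (l+1), by omega⟩ : Fin (l+1+1))) ?_ ?_ ?_ ?_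
      · intro w hw
        simp only [Finset.mem_coe, Finset.mem_filter, Finset.mem_univ, true_and] at hw
        obtain ⟨hodd, hRG, hAl⟩ := hfB w hw.1 hw.2
        refine Finset.mem_product.mpr ⟨?_, ?_⟩
        · exact Finset.mem_filter.mpr ⟨Finset.mem_range.mpr (w (Fin.last m)).isLt, hodd⟩
        · exact Finset.mem_filter.mpr ⟨Finset.mem_univ _, hRG, hAl⟩
      · intro b hb
        obtain ⟨hb1, hb2⟩ := Finset.mem_product.mp hb
        rw [Finset.mem_filter, Finset.mem_range] at hb1
        obtain ⟨hblt, hbodd⟩ := hb1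
        rw [Finset.mem_filter] at hb2
        obtain ⟨-, ⟨hp1, hp2, hp3⟩, hpAl⟩ := hb2
        have hbv : ((⟨min b.1 (l+1), by omega⟩ : Fin (l+1+1)) : ℕ) = b.1 := by
          show min b.1 (l+1) = b.1
          omega
        simp only [Finset.mem_coe, Finset.mem_filter, Finset.mem_univ, true_and]
        have hodd1 : 1 ≤ b.1 := by
          have := Nat.odd_iff.mp hbodd; omega
        refine ⟨⟨(snoc_RG_iff _ _).mpr ⟨hp1, by rw [hbv]; exact hodd1, hp2, ?_, ?_⟩,
          (snoc_allow_iff _ _).mpr ⟨hpAl, fun he => ?_⟩⟩, ?_⟩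
        · rw [hbv, hp3]; omega
        · rw [hbv, hp3]; exact max_eq_left (by omega)
        · rw [hbv] at he
          exact absurd hbodd (Nat.not_odd_iff_even.mpr he)
        · simp only [Fin.init_snoc]
          exact hp3
      · intro w hw
        simp only [Finset.mem_coe, Finset.mem_filter, Finset.mem_univ, true_and] at hw
        funext i
        rcases Fin.eq_castSucc_or_eq_last i with ⟨t, rfl⟩ | rfl
        · simp only [Fin.snoc_castSucc]
          rfl
        · simp only [Fin.snoc_last]
          apply Fin.ext
          show min ((w (Fin.last m)) : ℕ) (l+1) = ((w (Fin.last m)) : ℕ)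
          have := (w (Fin.last m)).isLt
          omega
      · intro b hb
        obtain ⟨hb1, hb2⟩ := Finset.mem_product.mp hb
        rw [Finset.mem_filter, Finset.mem_range] at hb1
        apply Prod.ext
        · simp only [Fin.snoc_last]
          show min b.1 (l+1) = b.1
          omega
        · simp only [Fin.init_snoc]
    have hC : (Finset.univ.filter fun p : Fin m → Fin (l+1+1) => IsRG p ∧ IsAllowable p).card
        = aCount m (l+1) := rfl
    have hC2 : (Finset.univ.filter fun p : Fin m → Fin (l+1) => IsRG p ∧ IsAllowable p).card
        = aCount m l := rfl
    rw [← hsplit, hA, hB, Finset.card_product, card_odd_range, hC, hC2]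
    omega
  · intro n
    match n with
    | 0 =>
      rw [if_pos rfl]
      unfold aCount
      rw [Finset.filter_true_of_mem]
      · simp
      · intro w _
        refine ⟨⟨fun i => i.elim0, fun i => i.elim0, by simp⟩, fun j _ => by simp⟩
    | s + 1 =>
      rw [if_neg (by omega)]
      unfold aCount
      rw [Finset.card_eq_zero, Finset.filter_eq_empty_iff]
      rintro w _ ⟨hRG, _⟩
      have h1 := hRG.1 0
      have h2 := (w 0).isLt
      omega
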